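/- Let k ≥ 6 be an integer and let s be an integer with 2 ≤ s ≤ (k−1)/2. Then 2·Σ_{h=1}^{s} (−1)^h + 2·Σ_{h=1}^{s} cos(hπ/k) > 0; that is, λ_k^{(s)} + λ_1^{(s)} > 0, where λ_j^{(s)} = 2·Σ_{h=1}^{s} cos(jhπ/k) are the eigenvalues of the circulant graph G(ℤ_{2k}, {1,…,s, 2k−s,…,2k−1}). -/

import Mathlib

open Real

theorem stmt12 (k s : ℕ) (hk : 6 ≤ k) (hs2 : 2 ≤ s) (hsk : 2 * s ≤ k - 1) :
    0 < 2 * ∑ h ∈ Finset.Icc (1 : ℕ) s, ((-1 : ℝ)) ^ h +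
        2 * ∑ h ∈ Finset.Icc (1 : ℕ) s, Real.cos ((h : ℝ) * π / k) := by
  have hkpos : (0 : ℝ) < k := by positivity
  have hpi : (0 : ℝ) < π := Real.pi_pos
  -- alternating sum ≥ -1
  have hA : (-1 : ℝ) ≤ ∑ h ∈ Finset.Icc (1 : ℕ) s, ((-1 : ℝ)) ^ h := by
    have h1 : ∑ h ∈ Finset.range (s + 1), ((-1 : ℝ)) ^ h =
        ∑ h ∈ Finset.Icc (1 : ℕ) s, ((-1 : ℝ)) ^ h + 1 := by
      rw [Finset.range_eq_Ico, show s + 1 = s + 1 from rfl]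
      rw [Finset.sum_Ico_eq_sum_range]
      rw [show (Finset.Icc (1:ℕ) s) = Finset.Ico 1 (s+1) by
        ext x; simp [Nat.lt_succ_iff]]
      rw [Finset.sum_Ico_eq_sum_range]
      simp [Finset.sum_range_succ']
      exact Finset.sum_congr rfl fun x _ => by rw [pow_add]; ring
    have h2 := neg_one_geom_sum (R := ℝ) (n := s + 1)
    rw [h1] at h2
    by_cases he : Even (s + 1) <;> simp [he] at h2 <;> linarith
  -- each cosine term is nonneg
  have hnonneg : ∀ h ∈ Finset.Icc (1 : ℕ) s, 0 ≤ Real.cos ((h : ℝ) * π / k) := by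
    intro h hh
    rw [Finset.mem_Icc] at hh
    apply Real.cos_nonneg_of_mem_Icc
    constructor
    · have : (0:ℝ) ≤ (h:ℝ) * π / k := by positivity
      linarith [Real.pi_div_two_pos]
    · have hhs : (h : ℝ) ≤ s := by exact_mod_cast hh.2
      have h2s : (2 * s : ℝ) ≤ (k : ℝ) - 1 := by
        have : (2 * s : ℕ) ≤ k - 1 := hsk
        have hk1 : 1 ≤ k := by omega
        have := (Nat.cast_le (α := ℝ)).2 this
        push_cast [Nat.cast_sub hk1] at this ⊢
        linarith
      rw [div_le_iff₀ hkpos]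
      nlinarith [Real.pi_pos]
  -- lower bound sum by the first two terms
  have hsub : Finset.Icc (1 : ℕ) 2 ⊆ Finset.Icc (1 : ℕ) s := by
    apply Finset.Icc_subset_Icc le_rfl hs2
  have hB : ∑ h ∈ Finset.Icc (1 : ℕ) 2, Real.cos ((h : ℝ) * π / k) ≤
      ∑ h ∈ Finset.Icc (1 : ℕ) s, Real.cos ((h : ℝ) * π / k) := by
    apply Finset.sum_le_sum_of_subset_of_nonneg hsub
    intro i hi _; exact hnonneg i hi
  have hIcc12 : ∑ h ∈ Finset.Icc (1 : ℕ) 2, Real.cos ((h : ℝ) * π / k) =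
      Real.cos (π / k) + Real.cos (2 * π / k) := by
    rw [show Finset.Icc (1:ℕ) 2 = {1, 2} by rfl]
    simp [Finset.sum_insert, Finset.sum_singleton]
  -- cos(π/k) > cos(2π/k)
  have hk6 : (6 : ℝ) ≤ k := by exact_mod_cast hk
  have hlt : Real.cos (2 * π / k) < Real.cos (π / k) := by
    apply Real.cos_lt_cos_of_nonneg_of_le_pi
    · positivity
    · rw [div_le_iff₀ hkpos]; nlinarith
    · rw [div_lt_div_iff₀ hkpos hkpos]; nlinarith
  -- cos(2π/k) ≥ 1/2
  have hge : (1 : ℝ) / 2 ≤ Real.cos (2 * π / k) := by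
    have := Real.cos_le_cos_of_nonneg_of_le_pi (x := 2 * π / k) (y := π / 3)
      (by positivity) (by linarith [Real.pi_pos]) (by
        rw [div_le_div_iff₀ hkpos (by norm_num : (0:ℝ) < 3)]; nlinarith)
    rw [Real.cos_pi_div_three] at this
    linarith
  have hBval : 1 < ∑ h ∈ Finset.Icc (1 : ℕ) s, Real.cos ((h : ℝ) * π / k) := by
    rw [hIcc12] at hB
    linarith
  linarith
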